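/- For every pair of positive integers d and D, there exists a finite subset V ⊂ ℝ^D such that, with ρ(x, y) = ‖x − y‖^{1/2} for x, y ∈ V (where ‖·‖ is the Euclidean norm on ℝ^D), the pair (V, ρ) is a metric space that admits no isometric embedding into ℝ^n for any positive integer n ≤ d; that is, for every n ≤ d there is no map φ : V → ℝ^n with ‖φ(x) − φ(u)‖ = ρ(x, u) for all x, u ∈ V. -/

import Mathlib

/-- A real-valued distance function is a metric. -/
def IsMetricDist {X : Type*} (ρ : X → X → ℝ) : Prop :=
  (∀ x y, 0 ≤ ρ x y) ∧ (∀ x y, ρ x y = 0 ↔ x = y) ∧ (∀ x y, ρ x y = ρ y x) ∧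
  (∀ x y z, ρ x z ≤ ρ x y + ρ y z)

lemma sqrt_add_le_aux (a b : ℝ) (ha : 0 ≤ a) (hb : 0 ≤ b) :
    Real.sqrt (a + b) ≤ Real.sqrt a + Real.sqrt b := by
  rw [Real.sqrt_le_iff]
  constructor
  · positivity
  · have h1 := Real.sq_sqrt ha
    have h2 := Real.sq_sqrt hb
    have h3 := Real.sqrt_nonneg a
    have h4 := Real.sqrt_nonneg b
    nlinarith

lemma inner_sub_sub_eq_aux {E : Type*} [NormedAddCommGroup E] [InnerProductSpace ℝ E]
    (X Y Z W : E) :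
    (inner ℝ (X - Y) (Z - W) : ℝ) =
      (‖X - W‖ ^ 2 + ‖Y - Z‖ ^ 2 - ‖X - Z‖ ^ 2 - ‖Y - W‖ ^ 2) / 2 := by
  simp only [norm_sub_sq_real, inner_sub_left, inner_sub_right]
  ring

lemma abs_key_aux (t : ℝ) (ht : 1 ≤ |t|) : |t + 1| + |t - 1| - 2 * |t| = 0 := by
  rcases abs_cases t with ⟨h1, h2⟩ | ⟨h1, h2⟩
  · rw [h1] at ht
    rw [abs_of_nonneg (by linarith), abs_of_nonneg (by linarith), h1]; ring
  · rw [h1] at ht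
    rw [abs_of_nonpos (by linarith), abs_of_nonpos (by linarith), h1]; ring

lemma snow_calc_aux (a b : ℝ) (hab : a = b ∨ 1 ≤ |a - b|) :
    (|a + 1 - b| + |a - (b + 1)| - |a + 1 - (b + 1)| - |a - b|) / 2
      = if a = b then 1 else 0 := by
  rcases hab with rfl | h
  · rw [if_pos rfl]
    have e1 : a + 1 - a = (1 : ℝ) := by ring
    have e2 : a - (a + 1) = (-1 : ℝ) := by ring
    have e3 : a + 1 - (a + 1) = (0 : ℝ) := by ring
    have e4 : a - a = (0 : ℝ) := by ring
    rw [e1, e2, e3, e4]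
    norm_num
  · have hne : a ≠ b := by
      intro h'
      rw [h', sub_self, abs_zero] at h
      linarith
    rw [if_neg hne]
    have h1 : a + 1 - b = (a - b) + 1 := by ring
    have h2 : a - (b + 1) = (a - b) - 1 := by ring
    have h3 : a + 1 - (b + 1) = a - b := by ring
    rw [h1, h2, h3]
    have := abs_key_aux (a - b) h
    linarith

/-- for all positive integers `d, D`, there is a finite subset
`V ⊂ ℝ^D` such that, equipping `V` with the `1/2`-snowflake of the Euclidean metric,
`ρ(x,y) = ‖x - y‖^(1/2)`, the pair `(V, ρ)` is a metric space admitting no isometric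
embedding into `ℝ^n` for any positive `n ≤ d`. -/
theorem snowflake_not_embeddable_low_dim (d D : ℕ) (hd : 0 < d) (hD : 0 < D) :
    ∃ V : Finset (EuclideanSpace ℝ (Fin D)),
      IsMetricDist (fun x y : V =>
        ‖(x : EuclideanSpace ℝ (Fin D)) - (y : EuclideanSpace ℝ (Fin D))‖ ^ (1/2 : ℝ)) ∧
      ∀ n : ℕ, 0 < n → n ≤ d →
        ¬ ∃ φ : V → EuclideanSpace ℝ (Fin n),
          ∀ x u : V,
            ‖φ x - φ u‖ =
              ‖(x : EuclideanSpace ℝ (Fin D)) - (u : EuclideanSpace ℝ (Fin D))‖ ^ (1/2 : ℝ) := by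
  classical
  set i0 : Fin D := ⟨0, hD⟩ with hi0
  set e : ℕ → EuclideanSpace ℝ (Fin D) := fun k => EuclideanSpace.single i0 (k : ℝ) with he
  have hsub : ∀ a b : ℝ,
      (EuclideanSpace.single i0 a : EuclideanSpace ℝ (Fin D)) - EuclideanSpace.single i0 b
        = EuclideanSpace.single i0 (a - b) := by
    intro a b
    ext m
    simp only [PiLp.sub_apply, EuclideanSpace.single_apply]
    split_ifs <;> simp
  have hnorm : ∀ j k : ℕ, ‖e j - e k‖ = |(j : ℝ) - (k : ℝ)| := by
    intro j k
    rw [he]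
    simp only
    rw [hsub, EuclideanSpace.norm_single, Real.norm_eq_abs]
  refine ⟨(Finset.range (d + 2)).image e, ⟨?_, ?_, ?_, ?_⟩, ?_⟩
  · intro x y
    dsimp only
    exact Real.rpow_nonneg (norm_nonneg _) _
  · intro x y
    dsimp only
    rw [← Real.sqrt_eq_rpow, Real.sqrt_eq_zero']
    constructor
    · intro h
      exact Subtype.ext (sub_eq_zero.mp (norm_eq_zero.mp (le_antisymm h (norm_nonneg _))))
    · rintro rfl
      simp
  · intro x y
    dsimp only
    rw [norm_sub_rev]
  · intro x y z
    dsimp only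
    rw [← Real.sqrt_eq_rpow, ← Real.sqrt_eq_rpow, ← Real.sqrt_eq_rpow]
    calc Real.sqrt ‖(x : EuclideanSpace ℝ (Fin D)) - z‖
        ≤ Real.sqrt (‖(x : EuclideanSpace ℝ (Fin D)) - y‖
            + ‖(y : EuclideanSpace ℝ (Fin D)) - z‖) := by
          apply Real.sqrt_le_sqrt
          have := dist_triangle (x : EuclideanSpace ℝ (Fin D)) y z
          simpa [dist_eq_norm] using this
      _ ≤ _ := sqrt_add_le_aux _ _ (norm_nonneg _) (norm_nonneg _)
  · rintro n hn hnd ⟨φ, hφ⟩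
    have hvmem : ∀ k : Fin (d + 2), e k ∈ (Finset.range (d + 2)).image e := by
      intro k
      exact Finset.mem_image_of_mem e (Finset.mem_range.mpr k.isLt)
    set v : Fin (d + 2) → ((Finset.range (d + 2)).image e : Finset _) :=
      fun k => ⟨e k, hvmem k⟩ with hv
    have key : ∀ p q : Fin (d + 2),
        ‖φ (v p) - φ (v q)‖ ^ 2 = |((p : ℕ) : ℝ) - ((q : ℕ) : ℝ)| := by
      intro p q
      rw [hφ]
      show (‖e p - e q‖ ^ (1/2 : ℝ)) ^ 2 = _
      rw [hnorm, ← Real.sqrt_eq_rpow, Real.sq_sqrt (abs_nonneg _)]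
    have orth : Orthonormal ℝ
        (fun k : Fin (d + 1) => φ (v k.succ) - φ (v k.castSucc)) := by
      rw [orthonormal_iff_ite]
      intro k l
      rw [inner_sub_sub_eq_aux, key, key, key, key]
      simp only [Fin.val_succ, Fin.coe_castSucc]
      push_cast
      rw [snow_calc_aux]
      · by_cases h : k = l
        · simp [h]
        · have hval : ((k : ℕ) : ℝ) ≠ ((l : ℕ) : ℝ) := by
            simpa [Fin.val_inj] using h
          rw [if_neg hval, if_neg h]
      · by_cases h : k = l
        · exact Or.inl (by rw [h])
        · right
          have hz : ((k : ℕ) : ℤ) ≠ ((l : ℕ) : ℤ) := by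
            simpa [Fin.val_inj] using h
          have h1 : (1 : ℤ) ≤ |((k : ℕ) : ℤ) - ((l : ℕ) : ℤ)| :=
            Int.one_le_abs (sub_ne_zero.mpr hz)
          exact_mod_cast h1
    have hcard := orth.linearIndependent.fintype_card_le_finrank
    rw [finrank_euclideanSpace_fin, Fintype.card_fin] at hcard
    omega
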